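/- Let J be the greedy index set determined by θ ∈ [0,1] and the residual r = b − Ax with Aᵀr ≠ 0, and let x' = x + I_J A_J† (b − Ax). Then ‖x' − x⋆‖²_{AᵀA} ≤ ‖x − x⋆‖²_{AᵀA} − (‖A_J‖_F² / σ_max(A_J)²) · ε · ‖Aᵀr‖₂². -/

import Mathlib

noncomputable section
open Matrix

/-- Squared Euclidean norm `‖v‖₂²` of a vector. -/
def norm2 {ι : Type*} [Fintype ι] (v : ι → ℝ) : ℝ := ∑ i, (v i) ^ 2

/-- Squared Frobenius norm `‖A‖_F²` of a matrix. -/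
def frob2 {ι κ : Type*} [Fintype ι] [Fintype κ] (A : Matrix ι κ ℝ) : ℝ :=
  ∑ i, ∑ j, (A i j) ^ 2

theorem Matrix.isHermitian_transpose_mul_self {ι κ : Type*} [Fintype ι]
    (B : Matrix ι κ ℝ) : (Bᵀ * B).IsHermitian := by
  simpa [Matrix.conjTranspose_eq_transpose_of_trivial] using
    Matrix.isHermitian_conjTranspose_mul_self B

/-- Squared largest singular value `σ_max(B)²`, i.e. the largest eigenvalue of `Bᵀ * B`. -/
def sigmaMaxSq {ι κ : Type*} [Fintype ι] [Fintype κ] [DecidableEq κ]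
    (B : Matrix ι κ ℝ) : ℝ :=
  sSup (Set.range (Matrix.isHermitian_transpose_mul_self B).eigenvalues)

/-- Squared smallest singular value `σ_min(B)²`, i.e. the smallest eigenvalue of `Bᵀ * B`. -/
def sigmaMinSq {ι κ : Type*} [Fintype ι] [Fintype κ] [DecidableEq κ]
    (B : Matrix ι κ ℝ) : ℝ :=
  sInf (Set.range (Matrix.isHermitian_transpose_mul_self B).eigenvalues)

/-- Squared Euclidean norm `‖A_(j)‖₂²` of the `j`-th column of `A`. -/
def col2 {m n : ℕ} (A : Matrix (Fin m) (Fin n) ℝ) (j : Fin n) : ℝ := ∑ i, (A i j) ^ 2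

/-- `A` has full column rank: its columns are linearly independent. -/
def FullColRank {m n : ℕ} (A : Matrix (Fin m) (Fin n) ℝ) : Prop :=
  LinearIndependent ℝ fun j : Fin n => (fun i => A i j : Fin m → ℝ)

/-- `max_{1 ≤ j ≤ n} |A_(j)ᵀ r|² / ‖A_(j)‖₂²`. -/
def maxRatio {m n : ℕ} (A : Matrix (Fin m) (Fin n) ℝ) (r : Fin m → ℝ) : ℝ :=
  ⨆ j : Fin n, ((Aᵀ *ᵥ r) j) ^ 2 / col2 A j

/-- The greedy parameter
`ε = (θ/‖Aᵀr‖₂²)·max_j |A_(j)ᵀ r|²/‖A_(j)‖₂² + (1−θ)/‖A‖_F²`. -/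
def eps {m n : ℕ} (A : Matrix (Fin m) (Fin n) ℝ) (r : Fin m → ℝ) (θ : ℝ) : ℝ :=
  θ / norm2 (Aᵀ *ᵥ r) * maxRatio A r + (1 - θ) / frob2 A

open Classical in
/-- The greedy index set `J = { j : |A_(j)ᵀ r|² ≥ ε ‖Aᵀr‖₂² ‖A_(j)‖₂² }`. -/
def greedySet {m n : ℕ} (A : Matrix (Fin m) (Fin n) ℝ) (r : Fin m → ℝ) (θ : ℝ) :
    Finset (Fin n) :=
  Finset.univ.filter fun j =>
    eps A r θ * norm2 (Aᵀ *ᵥ r) * col2 A j ≤ ((Aᵀ *ᵥ r) j) ^ 2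

/-- The column submatrix `A_J` of `A`, with columns indexed by `J`. -/
def subCols {m n : ℕ} (A : Matrix (Fin m) (Fin n) ℝ) (J : Finset (Fin n)) :
    Matrix (Fin m) {j // j ∈ J} ℝ :=
  A.submatrix id fun j => (j : Fin n)

/-- The submatrix `I_J` of the `n × n` identity with columns indexed by `J`. -/
def subId {n : ℕ} (J : Finset (Fin n)) : Matrix (Fin n) {j // j ∈ J} ℝ :=
  (1 : Matrix (Fin n) (Fin n) ℝ).submatrix id fun j => (j : Fin n)

/-- Moore–Penrose pseudoinverse of a full-column-rank matrix: `B† = (BᵀB)⁻¹Bᵀ`. -/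
def pinv {ι κ : Type*} [Fintype ι] [Fintype κ] [DecidableEq κ] (B : Matrix ι κ ℝ) :
    Matrix κ ι ℝ :=
  (Bᵀ * B)⁻¹ * Bᵀ

/-- The matrix `Ã_J` whose columns are the normalized columns `A_(j)/‖A_(j)‖₂`, `j ∈ J`. -/
def tildeA {m n : ℕ} (A : Matrix (Fin m) (Fin n) ℝ) (J : Finset (Fin n)) :
    Matrix (Fin m) {j // j ∈ J} ℝ :=
  Matrix.of fun i j => A i (j : Fin n) / Real.sqrt (col2 A (j : Fin n))

/-- The matrix `Ĩ_J` whose columns are `e_j/‖A_(j)‖₂`, `j ∈ J`. -/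
def tildeI {m n : ℕ} (A : Matrix (Fin m) (Fin n) ℝ) (J : Finset (Fin n)) :
    Matrix (Fin n) {j // j ∈ J} ℝ :=
  Matrix.of fun i j => (if i = (j : Fin n) then 1 else 0) / Real.sqrt (col2 A (j : Fin n))

lemma rayleigh_le {κ : Type*} [Fintype κ] [DecidableEq κ] {M : Matrix κ κ ℝ}
    (hM : M.IsHermitian) {lam : ℝ}
    (hlam : ∀ i, hM.eigenvalues i ≤ lam) (v : κ → ℝ) :
    v ⬝ᵥ (M *ᵥ v) ≤ lam * (v ⬝ᵥ v) := by
  classical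
  set U : Matrix κ κ ℝ := (hM.eigenvectorUnitary : Matrix κ κ ℝ) with hU
  have hstar : star U = Uᵀ := by
    rw [Matrix.star_eq_conjTranspose, Matrix.conjTranspose_eq_transpose_of_trivial]
  set y : κ → ℝ := Uᵀ *ᵥ v with hy
  have hUUt : U * Uᵀ = 1 := by
    rw [← hstar]; exact (Matrix.mem_unitaryGroup_iff).mp hM.eigenvectorUnitary.2
  have hUyv : U *ᵥ y = v := by rw [hy, mulVec_mulVec, hUUt, one_mulVec]
  have hvv : y ⬝ᵥ y = v ⬝ᵥ v := by
    calc y ⬝ᵥ y = (y ᵥ* Uᵀ) ⬝ᵥ v := dotProduct_mulVec _ _ _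
    _ = (U *ᵥ y) ⬝ᵥ v := by rw [vecMul_transpose]
    _ = v ⬝ᵥ v := by rw [hUyv]
  have hMv : v ⬝ᵥ (M *ᵥ v) = ∑ i, hM.eigenvalues i * (y i * y i) := by
    conv_lhs => rw [hM.spectral_theorem, Unitary.conjStarAlgAut_apply]
    rw [← mulVec_mulVec, ← mulVec_mulVec, hstar, ← hy, dotProduct_mulVec,
      ← Matrix.mulVec_transpose, ← hy]
    simp [dotProduct, mulVec_diagonal]
    exact Finset.sum_congr rfl fun i _ => by ring
  rw [hMv, hvv.symm]
  have : lam * (y ⬝ᵥ y) = ∑ i, lam * (y i * y i) := by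
    simp [dotProduct, Finset.mul_sum]
  rw [this]
  exact Finset.sum_le_sum fun i _ =>
    mul_le_mul_of_nonneg_right (hlam i) (mul_self_nonneg _)

lemma dot_conj {κ : Type*} [Fintype κ] (S : Matrix κ κ ℝ) (hSt : Sᵀ = S) (u v : κ → ℝ) :
    ((S * S) *ᵥ u) ⬝ᵥ v = (S *ᵥ u) ⬝ᵥ (S *ᵥ v) := by
  rw [← mulVec_mulVec, dotProduct_comm, dotProduct_mulVec, ← Matrix.mulVec_transpose, hSt,
    dotProduct_comm]

/-- one-step bound for the GBGS update with the greedy index set: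
`‖x′ − x⋆‖²_{AᵀA} ≤ ‖x − x⋆‖²_{AᵀA} − (‖A_J‖_F²/σ_max(A_J)²) ε ‖Aᵀr‖₂²`. -/
theorem stmt5 {m n : ℕ} (A : Matrix (Fin m) (Fin n) ℝ) (hA : FullColRank A)
    (b : Fin m → ℝ) (xstar : Fin n → ℝ) (hstar : (Aᵀ * A) *ᵥ xstar = Aᵀ *ᵥ b)
    (θ : ℝ) (hθ : θ ∈ Set.Icc (0 : ℝ) 1) (x : Fin n → ℝ)
    (r : Fin m → ℝ) (hr : r = b - A *ᵥ x) (hr0 : Aᵀ *ᵥ r ≠ 0)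
    (J : Finset (Fin n)) (hJ : J = greedySet A r θ) (x' : Fin n → ℝ)
    (hx' : x' = x + subId J *ᵥ (pinv (subCols A J) *ᵥ (b - A *ᵥ x))) :
    norm2 (A *ᵥ (x' - xstar)) ≤
      norm2 (A *ᵥ (x - xstar)) -
        frob2 (subCols A J) / sigmaMaxSq (subCols A J) *
          (eps A r θ * norm2 (Aᵀ *ᵥ r)) := by
  classical
  set B := subCols A J with hB
  set M := Bᵀ * B with hM
  set s : {j // j ∈ J} → ℝ := Bᵀ *ᵥ r with hs
  set t : {j // j ∈ J} → ℝ := M⁻¹ *ᵥ s with ht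
  set X : ℝ := eps A r θ * norm2 (Aᵀ *ᵥ r) with hX
  -- basic pieces
  have hsub : ∀ v : Fin m → ℝ, Bᵀ *ᵥ v = fun j : {j // j ∈ J} => (Aᵀ *ᵥ v) j.1 :=
    fun v => rfl
  have hBcols : LinearIndependent ℝ fun j : {j // j ∈ J} => Bᵀ j := by
    exact hA.comp (fun j : {j // j ∈ J} => (j : Fin n)) Subtype.val_injective
  have hBinj : Function.Injective B.mulVec := Matrix.mulVec_injective_iff.mpr hBcols
  have hMherm : M.IsHermitian := Matrix.isHermitian_transpose_mul_self B
  have hMpd : M.PosDef := by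
    refine Matrix.PosDef.of_dotProduct_mulVec_pos hMherm fun v hv => ?_
    have h1 : star v ⬝ᵥ (M *ᵥ v) = (B *ᵥ v) ⬝ᵥ (B *ᵥ v) := by
      rw [star_trivial, hM, ← mulVec_mulVec, dotProduct_mulVec, vecMul_transpose]
    rw [h1]
    have hBv : B *ᵥ v ≠ 0 := by
      intro h
      exact hv (hBinj (by rw [h, mulVec_zero]))
    have := (dotProduct_self_eq_zero (v := B *ᵥ v)).not.mpr hBv
    exact lt_of_le_of_ne (Finset.sum_nonneg fun i _ => mul_self_nonneg _) (Ne.symm this)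
  have hMdet : IsUnit M.det := (Matrix.isUnit_iff_isUnit_det M).mp hMpd.isUnit
  have hMt : M *ᵥ t = s := by
    rw [ht, mulVec_mulVec, Matrix.mul_nonsing_inv _ hMdet, one_mulVec]
  -- A * subId J = B
  have hAI : A * subId J = B := by
    ext i j
    rw [hB]
    simp [Matrix.mul_apply, subId, subCols, Matrix.one_apply, mul_ite]
  -- energy identity
  set w : Fin m → ℝ := A *ᵥ (x - xstar) with hw
  have hAtw : Aᵀ *ᵥ w = -(Aᵀ *ᵥ r) := by
    rw [hw, mulVec_mulVec, mulVec_sub, hstar, hr, mulVec_sub, ← mulVec_mulVec]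
    abel
  have hBtw : Bᵀ *ᵥ w = -s := by
    rw [hsub w, hs, hsub r]
    funext j
    rw [hAtw]
    simp
  have hx'x : A *ᵥ (x' - xstar) = w + B *ᵥ t := by
    have : x' - xstar = (x - xstar) + subId J *ᵥ t := by
      rw [hx', ← hr, ht, hs]
      have : pinv B *ᵥ r = M⁻¹ *ᵥ (Bᵀ *ᵥ r) := by
        rw [pinv, ← mulVec_mulVec, hM]
      rw [this]
      abel
    rw [this, mulVec_add, ← hw, mulVec_mulVec, hAI]
  have hident : norm2 (A *ᵥ (x' - xstar)) = norm2 w - s ⬝ᵥ t := by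
    have hn2 : ∀ {κ : Type} [Fintype κ] (v : κ → ℝ), norm2 v = v ⬝ᵥ v := by
      intro κ _ v
      exact Finset.sum_congr rfl fun i _ => sq (v i)
    rw [hx'x, hn2, hn2]
    have e1 : w ⬝ᵥ (B *ᵥ t) = -(s ⬝ᵥ t) := by
      rw [dotProduct_mulVec, ← Matrix.mulVec_transpose, hBtw, neg_dotProduct]
    have e2 : (B *ᵥ t) ⬝ᵥ (B *ᵥ t) = s ⬝ᵥ t := by
      rw [dotProduct_mulVec, ← Matrix.mulVec_transpose, mulVec_mulVec, ← hM, hMt]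
    have e3 : (B *ᵥ t) ⬝ᵥ w = -(s ⬝ᵥ t) := by rw [dotProduct_comm]; exact e1
    rw [add_dotProduct, dotProduct_add, dotProduct_add, e1, e2, e3]
    ring
  -- greedy bound
  have hfrob : frob2 B = ∑ j : {j // j ∈ J}, col2 A (j : Fin n) := by
    rw [frob2, Finset.sum_comm]
    rfl
  have hss : s ⬝ᵥ s = ∑ j : {j // j ∈ J}, ((Aᵀ *ᵥ r) (j : Fin n)) ^ 2 := by
    rw [hs, hsub r, dotProduct]
    exact Finset.sum_congr rfl fun j _ => (sq _).symm
  have hgreedy : X * frob2 B ≤ s ⬝ᵥ s := by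
    rw [hss, hfrob, Finset.mul_sum]
    refine Finset.sum_le_sum fun j _ => ?_
    have hj : (j : Fin n) ∈ greedySet A r θ := hJ ▸ j.2
    rw [greedySet, Finset.mem_filter] at hj
    calc X * col2 A (j : Fin n) = eps A r θ * norm2 (Aᵀ *ᵥ r) * col2 A (j : Fin n) := by
          rw [hX]
    _ ≤ _ := hj.2
  -- nonnegativity facts
  have hXnn : 0 ≤ X := by
    have h1 : 0 ≤ norm2 (Aᵀ *ᵥ r) := Finset.sum_nonneg fun i _ => sq_nonneg _
    have h2 : 0 ≤ eps A r θ := by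
      rw [eps]
      have h3 : 0 ≤ maxRatio A r :=
        Real.iSup_nonneg fun j => div_nonneg (sq_nonneg _)
          (Finset.sum_nonneg fun i _ => sq_nonneg _)
      have h4 : 0 ≤ frob2 A :=
        Finset.sum_nonneg fun i _ => Finset.sum_nonneg fun j _ => sq_nonneg _
      refine add_nonneg (mul_nonneg (div_nonneg hθ.1 h1) h3)
        (div_nonneg (by linarith [hθ.2]) h4)
    exact mul_nonneg h2 h1
  have hstnn : 0 ≤ s ⬝ᵥ t := by
    have : s ⬝ᵥ t = (M *ᵥ t) ⬝ᵥ t := by rw [hMt]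
    rw [this, dotProduct_comm]
    have := hMpd.posSemidef.dotProduct_mulVec_nonneg t
    rwa [star_trivial] at this
  have hfrobnn : 0 ≤ frob2 B :=
    Finset.sum_nonneg fun i _ => Finset.sum_nonneg fun j _ => sq_nonneg _
  -- key inequality
  have hkey : frob2 B / sigmaMaxSq B * X ≤ s ⬝ᵥ t := by
    by_cases hJe : J = ∅
    · haveI : IsEmpty {j // j ∈ J} := by
        exact ⟨fun j => absurd j.2 (by simp [hJe])⟩
      have h1 : frob2 B = 0 := by
        rw [frob2]; simp
      have h2 : s ⬝ᵥ t = 0 := by rw [dotProduct]; simp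
      rw [h1, h2, zero_div, zero_mul]
    · haveI : Nonempty {j // j ∈ J} := by
        obtain ⟨j, hj⟩ := Finset.nonempty_iff_ne_empty.mpr hJe
        exact ⟨⟨j, hj⟩⟩
      set σ : ℝ := sigmaMaxSq B with hσ
      have hbdd : BddAbove (Set.range hMherm.eigenvalues) :=
        (Set.finite_range _).bddAbove
      have hlam : ∀ i, hMherm.eigenvalues i ≤ σ := fun i => le_csSup hbdd ⟨i, rfl⟩
      have hσpos : 0 < σ := by
        obtain ⟨j0⟩ := ‹Nonempty {j // j ∈ J}›
        exact lt_of_lt_of_le (hMpd.eigenvalues_pos j0) (hlam j0)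
      have hray : s ⬝ᵥ (M *ᵥ s) ≤ σ * (s ⬝ᵥ s) := rayleigh_le hMherm hlam s
      -- Cauchy–Schwarz via sqrt
      have hpsd : M.PosSemidef := hMpd.posSemidef
      open MatrixOrder in
      set S := CFC.sqrt M with hS
      have hSS : S * S = M := by
        open MatrixOrder in exact CFC.sqrt_mul_sqrt_self M hpsd.nonneg
      have hSt : Sᵀ = S := by
        have := (open MatrixOrder in (CFC.sqrt_nonneg M).posSemidef).isHermitian
        rwa [Matrix.IsHermitian, Matrix.conjTranspose_eq_transpose_of_trivial] at this
      have hMtr : Mᵀ = M := by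
        have := hMherm
        rwa [Matrix.IsHermitian, Matrix.conjTranspose_eq_transpose_of_trivial] at this
      have hcs : (s ⬝ᵥ s) ^ 2 ≤ (s ⬝ᵥ t) * (s ⬝ᵥ (M *ᵥ s)) := by
        have e1 : s ⬝ᵥ s = (S *ᵥ t) ⬝ᵥ (S *ᵥ s) := by
          have h := dot_conj S hSt t s
          rw [hSS, hMt] at h
          exact h
        have e2 : (S *ᵥ t) ⬝ᵥ (S *ᵥ t) = s ⬝ᵥ t := by
          have h := dot_conj S hSt t t
          rw [hSS, hMt] at h
          exact h.symm
        have e3 : (S *ᵥ s) ⬝ᵥ (S *ᵥ s) = s ⬝ᵥ (M *ᵥ s) := by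
          have h := dot_conj S hSt s s
          rw [hSS] at h
          rw [← h, dotProduct_comm]
        have hc := Finset.sum_mul_sq_le_sq_mul_sq Finset.univ (S *ᵥ t) (S *ᵥ s)
        have d1 : (S *ᵥ t) ⬝ᵥ (S *ᵥ s) = ∑ i, (S *ᵥ t) i * (S *ᵥ s) i := rfl
        have d2 : ∑ i, ((S *ᵥ t) i) ^ 2 = (S *ᵥ t) ⬝ᵥ (S *ᵥ t) :=
          Finset.sum_congr rfl fun i _ => sq _
        have d3 : ∑ i, ((S *ᵥ s) i) ^ 2 = (S *ᵥ s) ⬝ᵥ (S *ᵥ s) :=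
          Finset.sum_congr rfl fun i _ => sq _
        rw [e1, d1]
        calc (∑ i, (S *ᵥ t) i * (S *ᵥ s) i) ^ 2
            ≤ (∑ i, ((S *ᵥ t) i) ^ 2) * (∑ i, ((S *ᵥ s) i) ^ 2) := hc
        _ = (s ⬝ᵥ t) * (s ⬝ᵥ (M *ᵥ s)) := by rw [d2, e2, d3, e3]
      -- combine
      rw [div_mul_eq_mul_div, div_le_iff₀ hσpos]
      have hssnn : 0 ≤ s ⬝ᵥ s := Finset.sum_nonneg fun i _ => mul_self_nonneg _
      rcases eq_or_lt_of_le hssnn with hss0 | hsspos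
      · have : X * frob2 B ≤ 0 := hss0 ▸ hgreedy
        calc frob2 B * X = X * frob2 B := mul_comm _ _
        _ ≤ 0 := this
        _ ≤ s ⬝ᵥ t * σ := mul_nonneg hstnn hσpos.le
      · have h5 : (s ⬝ᵥ s) * (s ⬝ᵥ s) ≤ (s ⬝ᵥ t * σ) * (s ⬝ᵥ s) := by
          calc (s ⬝ᵥ s) * (s ⬝ᵥ s) = (s ⬝ᵥ s) ^ 2 := (sq _).symm
          _ ≤ (s ⬝ᵥ t) * (s ⬝ᵥ (M *ᵥ s)) := hcs
          _ ≤ (s ⬝ᵥ t) * (σ * (s ⬝ᵥ s)) := mul_le_mul_of_nonneg_left hray hstnn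
          _ = (s ⬝ᵥ t * σ) * (s ⬝ᵥ s) := by ring
        have h6 : s ⬝ᵥ s ≤ s ⬝ᵥ t * σ := le_of_mul_le_mul_right h5 hsspos
        calc frob2 B * X = X * frob2 B := mul_comm _ _
        _ ≤ s ⬝ᵥ s := hgreedy
        _ ≤ s ⬝ᵥ t * σ := h6
  -- finish
  rw [hident]
  have : norm2 w = norm2 (A *ᵥ (x - xstar)) := by rw [hw]
  rw [this] at *
  exact sub_le_sub_left hkey _
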